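/- Let G be a graph obtained as a clique-sum of graphs G_1 and G_2 along a shared clique K, and let C be a cycle in G using vertices from both G_1 \ K and G_2 \ K. Let {a,b} ⊆ K be the vertices where C crosses between the two sides (|K| ≤ 3 so C crosses exactly twice). Then C decomposes as the sum of two cycles C_1 in G_1 and C_2 in G_2, where C_1 consists of the edges of C inside G_1 together with the virtual edge (a,b), and C_2 consists of the edges of C inside G_2 together with the virtual edge (b,a); moreover every real edge of C belongs to exactly one of C_1, C_2. -/

import Mathlib

/- STATEMENT 12: Decomposition of a cycle along a clique-sum.  `G` is a
clique-sum of `G₁` (induced on `V₁`) and `G₂` (induced on `V₂`) along the shared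
clique `K = V₁ ∩ V₂` of size at most 3: every edge of `G` lies within `V₁` or
within `V₂`.  Let `C` be a cycle of `G` using vertices of both `V₁ \ K` and
`V₂ \ K`, meeting `K` exactly in the two crossing vertices `a, b` and using no
edge inside `K`.  Then `C` is the sum of two cycles: `C₁` in `G₁` augmented with
the virtual edge `(a,b)`, and `C₂` in `G₂` augmented with the virtual edge
`(b,a)`; the edges of `C₁` are the edges of `C` inside `G₁` plus the virtual
edge, similarly for `C₂`, and every real edge of `C` belongs to exactly one of
`C₁`, `C₂`. -/
open SimpleGraph

lemma side_all {V : Type*} {G : SimpleGraph V} {A B : Set V}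
    (hsep : ∀ x y, G.Adj x y → (x ∈ A ∧ y ∈ A) ∨ (x ∈ B ∧ y ∈ B)) :
    ∀ {x y : V} (W : G.Walk x y), W.IsPath → x ∈ A → x ∉ B →
      (∀ z ∈ W.support, z ≠ y → ¬(z ∈ A ∧ z ∈ B)) → ∀ z ∈ W.support, z ∈ A := by
  intro x y W
  induction W with
  | nil =>
    intro _ hx _ _ z hz
    simp only [Walk.support_nil, List.mem_singleton] at hz
    exact hz ▸ hx
  | @cons x w y h W ih =>
    intro hp hx hxB hint z hz
    rw [Walk.support_cons, List.mem_cons] at hz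
    rcases hz with rfl | hz
    · exact hx
    have hw : w ∈ A := by
      rcases hsep x w h with ⟨_, h2⟩ | ⟨h1, _⟩
      · exact h2
      · exact absurd h1 hxB
    by_cases hwy : w = y
    · subst hwy
      have : W = Walk.nil := (Walk.isPath_iff_eq_nil (p := W)).mp hp.of_cons
      subst this
      simp only [Walk.support_nil, List.mem_singleton] at hz
      exact hz ▸ hw
    · have hwB : w ∉ B := fun hb => hint w (by simp) hwy ⟨hw, hb⟩
      exact ih hp.of_cons hw hwB (fun z hz hzy => hint z (by simp [hz]) hzy) z hz

lemma build_cycle {V : Type*} {G : SimpleGraph V} {A : Set V} {a b : V}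
    (r : V → V → Prop)
    (hr : ∀ x y, G.Adj x y → x ∈ A → y ∈ A → (r x y ∨ r y x))
    (hvirt : r a b ∨ r b a) (hab : a ≠ b)
    (R : G.Walk b a) (hRp : R.IsPath) (hRs : ∀ z ∈ R.support, z ∈ A)
    (hRab : s(a, b) ∉ R.edges) :
    ∃ c : (SimpleGraph.fromRel r).Walk a a, c.IsCycle ∧
      c.edges = s(a, b) :: R.edges := by
  have htr : ∀ e ∈ R.edges, e ∈ (SimpleGraph.fromRel r).edgeSet := by
    intro e he
    induction e with
    | h x y =>
      have hadj : G.Adj x y := R.edges_subset_edgeSet he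
      have hx : x ∈ R.support := R.fst_mem_support_of_mem_edges he
      have hy : y ∈ R.support := R.snd_mem_support_of_mem_edges he
      rw [SimpleGraph.mem_edgeSet, SimpleGraph.fromRel_adj]
      exact ⟨hadj.ne, hr x y hadj (hRs x hx) (hRs y hy)⟩
  have hadj : (SimpleGraph.fromRel r).Adj a b := (SimpleGraph.fromRel_adj r a b).mpr ⟨hab, hvirt⟩
  refine ⟨Walk.cons hadj (R.transfer _ htr), ?_, ?_⟩
  · rw [Walk.cons_isCycle_iff]
    exact ⟨hRp.transfer htr, by rwa [Walk.edges_transfer]⟩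
  · rw [Walk.edges_cons, Walk.edges_transfer]

lemma mem_support_closed {V : Type*} {G : SimpleGraph V} {u : V} {c : G.Walk u u}
    (hc : c ≠ Walk.nil) (x : V) : x ∈ c.support ↔ x ∈ c.support.tail := by
  cases c with
  | nil => exact absurd rfl hc
  | cons h p =>
    rw [Walk.support_cons, List.mem_cons, List.tail_cons]
    exact ⟨fun hx => hx.elim (fun hx => hx ▸ p.end_mem_support) id, Or.inr⟩

open Classical in
theorem stmt12 {V : Type*} (G : SimpleGraph V) (V₁ V₂ : Set V)
    (hcover : V₁ ∪ V₂ = Set.univ)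
    (hsep : ∀ x y, G.Adj x y → (x ∈ V₁ ∧ y ∈ V₁) ∨ (x ∈ V₂ ∧ y ∈ V₂))
    (K : Set V) (hK : K = V₁ ∩ V₂) (hKcard : Nat.card K ≤ 3)
    (a b : V) (haK : a ∈ K) (hbK : b ∈ K) (hab : a ≠ b)
    (u : V) (C : G.Walk u u) (hC : C.IsCycle)
    (hside₁ : ∃ x ∈ C.support, x ∈ V₁ \ K)
    (hside₂ : ∃ x ∈ C.support, x ∈ V₂ \ K)
    (hcross : {x | x ∈ C.support} ∩ K = {a, b})
    (hnoK : ∀ e ∈ C.edges, ¬ (∀ x ∈ e, x ∈ K)) :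
    ∃ (C₁ : (SimpleGraph.fromRel (fun x y =>
        (G.Adj x y ∧ x ∈ V₁ ∧ y ∈ V₁) ∨ (x = a ∧ y = b))).Walk a a)
      (C₂ : (SimpleGraph.fromRel (fun x y =>
        (G.Adj x y ∧ x ∈ V₂ ∧ y ∈ V₂) ∨ (x = b ∧ y = a))).Walk a a),
      C₁.IsCycle ∧ C₂.IsCycle ∧
      (C₁.edges : Multiset (Sym2 V)) =
        s(a, b) ::ₘ (C.edges : Multiset (Sym2 V)).filter (fun e => ∀ x ∈ e, x ∈ V₁) ∧
      (C₂.edges : Multiset (Sym2 V)) =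
        s(b, a) ::ₘ (C.edges : Multiset (Sym2 V)).filter (fun e => ∀ x ∈ e, x ∈ V₂) ∧
      (∀ e ∈ C.edges,
        ((∀ x ∈ e, x ∈ V₁) ∧ ¬ (∀ x ∈ e, x ∈ V₂)) ∨
        ((∀ x ∈ e, x ∈ V₂) ∧ ¬ (∀ x ∈ e, x ∈ V₁))) := by
  subst hK
  -- basic membership facts
  have hCK : ∀ e ∈ C.edges, (∀ x ∈ e, x ∈ V₁) → (∀ x ∈ e, x ∈ V₂) → False :=
    fun e he h1 h2 => hnoK e he (fun x hx => ⟨h1 x hx, h2 x hx⟩)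
  have habmem : ∀ x ∈ s(a, b), x ∈ V₁ ∩ V₂ := by
    intro z hz
    rw [Sym2.mem_iff] at hz
    rcases hz with rfl | rfl
    · exact haK
    · exact hbK
  have haC : a ∈ C.support := by
    have : a ∈ ({a, b} : Set V) := by simp
    rw [← hcross] at this
    exact this.1
  have hbC : b ∈ C.support := by
    have : b ∈ ({a, b} : Set V) := by simp
    rw [← hcross] at this
    exact this.1
  have hKmem : ∀ x, x ∈ C.support → x ∈ V₁ → x ∈ V₂ → x = a ∨ x = b := by
    intro x h1 h2 h3
    have : x ∈ ({a, b} : Set V) := hcross ▸ ⟨h1, h2, h3⟩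
    simpa using this
  set D := C.rotate a haC with hDdef
  have hD : D.IsCycle := hC.rotate haC
  have hDedges : ∀ e, e ∈ D.edges ↔ e ∈ C.edges := fun e => (C.rotate_edges a haC).mem_iff
  have hDmult : (D.edges : Multiset (Sym2 V)) = (C.edges : Multiset (Sym2 V)) :=
    Quot.sound (C.rotate_edges a haC).perm
  have hDsup : ∀ x, x ∈ D.support ↔ x ∈ C.support := by
    intro x
    rw [mem_support_closed hD.ne_nil, mem_support_closed hC.ne_nil]
    exact (C.support_rotate a haC).mem_iff
  clear_value D
  clear hDdef
  obtain ⟨w, h, T, rfl⟩ : ∃ w, ∃ h : G.Adj a w, ∃ T : G.Walk w a, D = Walk.cons h T := by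
    cases D with
    | nil => exact absurd rfl hD.ne_nil
    | cons h T => exact ⟨_, h, T, rfl⟩
  obtain ⟨hT, -⟩ := (Walk.cons_isCycle_iff T h).mp hD
  have hbT : b ∈ T.support := by
    have hb' : b ∈ (Walk.cons h T).support := (hDsup b).mpr hbC
    rw [Walk.support_cons, List.mem_cons] at hb'
    exact hb'.resolve_left (fun hba => hab hba.symm)
  have hTD : ∀ z ∈ T.support, z ∈ C.support := fun z hz =>
    (hDsup z).mp (by rw [Walk.support_cons]; exact List.mem_cons_of_mem _ hz)
  have hTed : ∀ e ∈ T.edges, e ∈ C.edges := fun e he =>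
    (hDedges e).mp (by rw [Walk.edges_cons]; exact List.mem_cons_of_mem _ he)
  have hwC : w ∈ C.support := hTD w T.start_mem_support
  have hwK : ¬(w ∈ V₁ ∧ w ∈ V₂) := by
    rintro ⟨h1, h2⟩
    rcases hKmem w hwC h1 h2 with rfl | rfl
    · exact h.ne rfl
    · have he : s(a, w) ∈ C.edges :=
        (hDedges _).mp (by rw [Walk.edges_cons]; exact List.mem_cons_self)
      exact hnoK _ he habmem
  set W := T.takeUntil b hbT with hWdef
  set Q := T.dropUntil b hbT with hQdef
  have hspec : W.append Q = T := T.take_spec hbT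
  have hWp : W.IsPath := hT.takeUntil hbT
  have hQp : Q.IsPath := hT.dropUntil hbT
  have haQ : a ∈ Q.support.tail := by
    have ha' : a ∈ Q.support := Q.end_mem_support
    rw [Walk.mem_support_iff] at ha'
    exact ha'.resolve_left hab
  have haW : a ∉ W.support := by
    intro haW
    have hnd : T.support.Nodup := hT.support_nodup
    rw [← hspec, Walk.support_append, List.nodup_append] at hnd
    exact hnd.2.2 a haW a haQ rfl
  have hWsub : ∀ z ∈ W.support, z ∈ T.support := fun z hz => T.support_takeUntil_subset hbT hz
  have hQsub : ∀ z ∈ Q.support, z ∈ T.support := fun z hz => T.support_dropUntil_subset hbT hz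
  have hTsup : ∀ z ∈ T.support, z ∈ W.support ∨ z ∈ Q.support.tail := by
    intro z hz
    rw [← hspec, Walk.support_append, List.mem_append] at hz
    exact hz
  have hWed : ∀ e ∈ W.edges, e ∈ C.edges := fun e he =>
    hTed e (by rw [← hspec, Walk.edges_append, List.mem_append]; exact Or.inl he)
  have hQed : ∀ e ∈ Q.edges, e ∈ C.edges := fun e he =>
    hTed e (by rw [← hspec, Walk.edges_append, List.mem_append]; exact Or.inr he)
  have hintW : ∀ z ∈ W.support, z ≠ b → ¬(z ∈ V₁ ∧ z ∈ V₂) := by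
    rintro z hz hzb ⟨h1, h2⟩
    rcases hKmem z (hTD z (hWsub z hz)) h1 h2 with rfl | rfl
    · exact haW hz
    · exact hzb rfl
  have hsumWQ : (W.edges : Multiset (Sym2 V)) + (Q.edges : Multiset (Sym2 V)) +
      {s(a, w)} = (C.edges : Multiset (Sym2 V)) := by
    rw [← hDmult, Walk.edges_cons, ← hspec, Walk.edges_append, Multiset.coe_add,
      ← Multiset.cons_coe, ← Multiset.singleton_add, add_comm]
  clear_value W Q
  clear hWdef hQdef
  obtain ⟨y, h2, Q2, rfl⟩ : ∃ y, ∃ h2 : G.Adj b y, ∃ Q2 : G.Walk y a, Q = Walk.cons h2 Q2 := by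
    cases Q with
    | nil => exact absurd rfl hab
    | cons h2 Q2 => exact ⟨_, h2, Q2, rfl⟩
  have hQ2sub : ∀ z ∈ Q2.support, z ∈ T.support := fun z hz =>
    hQsub z (by rw [Walk.support_cons]; exact List.mem_cons_of_mem _ hz)
  have hbQ2 : b ∉ Q2.support := ((Walk.cons_isPath_iff h2 Q2).mp hQp).2
  have hQ2p : Q2.IsPath := hQp.of_cons
  have hyT : y ∈ T.support := hQ2sub y Q2.start_mem_support
  have hyK : ¬(y ∈ V₁ ∧ y ∈ V₂) := by
    rintro ⟨h1, h2'⟩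
    rcases hKmem y (hTD y hyT) h1 h2' with hy | hy
    · have he : s(b, y) ∈ C.edges :=
        hQed _ (by rw [Walk.edges_cons]; exact List.mem_cons_self)
      rw [hy, Sym2.eq_swap] at he
      exact hnoK _ he habmem
    · exact h2.ne hy.symm
  have hintQ2 : ∀ z ∈ Q2.support, z ≠ a → ¬(z ∈ V₁ ∧ z ∈ V₂) := by
    rintro z hz hza ⟨p1, p2⟩
    rcases hKmem z (hTD z (hQ2sub z hz)) p1 p2 with rfl | rfl
    · exact hza rfl
    · exact hbQ2 hz
  have hsep' : ∀ x y, G.Adj x y → (x ∈ V₂ ∧ y ∈ V₂) ∨ (x ∈ V₁ ∧ y ∈ V₁) :=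
    fun x y hxy => (hsep x y hxy).symm
  have hmemU : ∀ x : V, x ∈ V₁ ∨ x ∈ V₂ := by
    intro x
    have : x ∈ V₁ ∪ V₂ := hcover.symm ▸ Set.mem_univ x
    exact this
  -- The two arcs
  obtain ⟨R₁, R₂, hR₁p, hR₂p, hR₁s, hR₂s, hsum⟩ :
      ∃ (R₁ R₂ : G.Walk b a), R₁.IsPath ∧ R₂.IsPath ∧ (∀ z ∈ R₁.support, z ∈ V₁) ∧
        (∀ z ∈ R₂.support, z ∈ V₂) ∧
        (R₁.edges : Multiset (Sym2 V)) + (R₂.edges : Multiset (Sym2 V)) =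
          (C.edges : Multiset (Sym2 V)) := by
    set P : G.Walk a b := Walk.cons h W with hPdef
    have hPp : P.IsPath := (Walk.cons_isPath_iff h W).mpr ⟨hWp, haW⟩
    have hPed : (P.edges : Multiset (Sym2 V)) = {s(a, w)} + (W.edges : Multiset (Sym2 V)) := by
      rw [hPdef, Walk.edges_cons, ← Multiset.cons_coe, ← Multiset.singleton_add]
    have hsumP : (P.edges : Multiset (Sym2 V)) + ((Walk.cons h2 Q2).edges : Multiset (Sym2 V)) =
        (C.edges : Multiset (Sym2 V)) := by
      rw [hPed, ← hsumWQ]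
      abel
    rcases hmemU w with hw1 | hw2
    · -- W-side is V₁
      have hw2 : w ∉ V₂ := fun hh => hwK ⟨hw1, hh⟩
      have hWall : ∀ z ∈ W.support, z ∈ V₁ := side_all hsep W hWp hw1 hw2 hintW
      have hPall : ∀ z ∈ P.support, z ∈ V₁ := by
        intro z hz
        rw [hPdef, Walk.support_cons, List.mem_cons] at hz
        rcases hz with rfl | hz
        · exact haK.1
        · exact hWall z hz
      have hyV : y ∈ V₂ := by
        by_contra hy2
        have hy1 : y ∈ V₁ := (hmemU y).resolve_right hy2
        have hQ2all : ∀ z ∈ Q2.support, z ∈ V₁ :=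
          side_all hsep Q2 hQ2p hy1 hy2 hintQ2
        obtain ⟨x, hxC, hx2, hxK⟩ := hside₂
        have hx1 : x ∈ V₁ := by
          have hxD : x ∈ (Walk.cons h T).support := (hDsup x).mpr hxC
          rw [Walk.support_cons, List.mem_cons] at hxD
          rcases hxD with rfl | hxT
          · exact haK.1
          rcases hTsup x hxT with hxW | hxQ
          · exact hWall x hxW
          · rw [Walk.support_cons, List.tail_cons] at hxQ
            exact hQ2all x hxQ
        exact hxK ⟨hx1, hx2⟩
      have hy1' : y ∉ V₁ := fun hh => hyK ⟨hh, hyV⟩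
      have hQ2all : ∀ z ∈ Q2.support, z ∈ V₂ :=
        side_all hsep' Q2 hQ2p hyV hy1' (fun z hz hza hmem => hintQ2 z hz hza hmem.symm)
      refine ⟨P.reverse, Walk.cons h2 Q2, hPp.reverse, hQp, ?_, ?_, ?_⟩
      · intro z hz
        rw [Walk.support_reverse, List.mem_reverse] at hz
        exact hPall z hz
      · intro z hz
        rw [Walk.support_cons, List.mem_cons] at hz
        rcases hz with rfl | hz
        · exact hbK.2
        · exact hQ2all z hz
      · rw [Walk.edges_reverse, Multiset.coe_reverse]
        exact hsumP
    · -- W-side is V₂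
      have hw1 : w ∉ V₁ := fun hh => hwK ⟨hh, hw2⟩
      have hWall : ∀ z ∈ W.support, z ∈ V₂ :=
        side_all hsep' W hWp hw2 hw1 (fun z hz hzb hmem => hintW z hz hzb hmem.symm)
      have hPall : ∀ z ∈ P.support, z ∈ V₂ := by
        intro z hz
        rw [hPdef, Walk.support_cons, List.mem_cons] at hz
        rcases hz with rfl | hz
        · exact haK.2
        · exact hWall z hz
      have hyV : y ∈ V₁ := by
        by_contra hy1
        have hy2 : y ∈ V₂ := (hmemU y).resolve_left hy1
        have hQ2all : ∀ z ∈ Q2.support, z ∈ V₂ :=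
          side_all hsep' Q2 hQ2p hy2 hy1 (fun z hz hza hmem => hintQ2 z hz hza hmem.symm)
        obtain ⟨x, hxC, hx1, hxK⟩ := hside₁
        have hx2 : x ∈ V₂ := by
          have hxD : x ∈ (Walk.cons h T).support := (hDsup x).mpr hxC
          rw [Walk.support_cons, List.mem_cons] at hxD
          rcases hxD with rfl | hxT
          · exact haK.2
          rcases hTsup x hxT with hxW | hxQ
          · exact hWall x hxW
          · rw [Walk.support_cons, List.tail_cons] at hxQ
            exact hQ2all x hxQ
        exact hxK ⟨hx1, hx2⟩
      have hy2' : y ∉ V₂ := fun hh => hyK ⟨hyV, hh⟩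
      have hQ2all : ∀ z ∈ Q2.support, z ∈ V₁ :=
        side_all hsep Q2 hQ2p hyV hy2' hintQ2
      refine ⟨Walk.cons h2 Q2, P.reverse, hQp, hPp.reverse, ?_, ?_, ?_⟩
      · intro z hz
        rw [Walk.support_cons, List.mem_cons] at hz
        rcases hz with rfl | hz
        · exact hbK.1
        · exact hQ2all z hz
      · intro z hz
        rw [Walk.support_reverse, List.mem_reverse] at hz
        exact hPall z hz
      · rw [Walk.edges_reverse, Multiset.coe_reverse, add_comm]
        exact hsumP
  -- finish
  have hR₁mem : ∀ e ∈ R₁.edges, e ∈ C.edges := by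
    intro e he
    have : e ∈ (R₁.edges : Multiset (Sym2 V)) + (R₂.edges : Multiset (Sym2 V)) :=
      Multiset.mem_add.mpr (Or.inl (Multiset.mem_coe.mpr he))
    rw [hsum] at this
    exact Multiset.mem_coe.mp this
  have hR₂mem : ∀ e ∈ R₂.edges, e ∈ C.edges := by
    intro e he
    have : e ∈ (R₁.edges : Multiset (Sym2 V)) + (R₂.edges : Multiset (Sym2 V)) :=
      Multiset.mem_add.mpr (Or.inr (Multiset.mem_coe.mpr he))
    rw [hsum] at this
    exact Multiset.mem_coe.mp this
  have hR₁all : ∀ e ∈ R₁.edges, ∀ x ∈ e, x ∈ V₁ := by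
    intro e he
    induction e with
    | h x y =>
      intro z hz
      rw [Sym2.mem_iff] at hz
      rcases hz with rfl | rfl
      · exact hR₁s z (R₁.fst_mem_support_of_mem_edges he)
      · exact hR₁s z (R₁.snd_mem_support_of_mem_edges he)
  have hR₂all : ∀ e ∈ R₂.edges, ∀ x ∈ e, x ∈ V₂ := by
    intro e he
    induction e with
    | h x y =>
      intro z hz
      rw [Sym2.mem_iff] at hz
      rcases hz with rfl | rfl
      · exact hR₂s z (R₂.fst_mem_support_of_mem_edges he)
      · exact hR₂s z (R₂.snd_mem_support_of_mem_edges he)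
  have hnotab₁ : s(a, b) ∉ R₁.edges := fun he => hnoK _ (hR₁mem _ he) habmem
  have hnotab₂ : s(a, b) ∉ R₂.edges := fun he => hnoK _ (hR₂mem _ he) habmem
  obtain ⟨C₁, hC₁cyc, hC₁ed⟩ :=
    build_cycle (G := G) (A := V₁)
      (fun x y => (G.Adj x y ∧ x ∈ V₁ ∧ y ∈ V₁) ∨ (x = a ∧ y = b))
      (fun x y hxy hx hy => Or.inl (Or.inl ⟨hxy, hx, hy⟩))
      (Or.inl (Or.inr ⟨rfl, rfl⟩)) hab R₁ hR₁p hR₁s hnotab₁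
  obtain ⟨C₂, hC₂cyc, hC₂ed⟩ :=
    build_cycle (G := G) (A := V₂)
      (fun x y => (G.Adj x y ∧ x ∈ V₂ ∧ y ∈ V₂) ∨ (x = b ∧ y = a))
      (fun x y hxy hx hy => Or.inl (Or.inl ⟨hxy, hx, hy⟩))
      (Or.inr (Or.inr ⟨rfl, rfl⟩)) hab R₂ hR₂p hR₂s hnotab₂
  have hfilter₁ : (C.edges : Multiset (Sym2 V)).filter (fun e => ∀ x ∈ e, x ∈ V₁) =
      (R₁.edges : Multiset (Sym2 V)) := by
    rw [← hsum, Multiset.filter_add]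
    rw [Multiset.filter_eq_self.mpr (fun e he => hR₁all e (Multiset.mem_coe.mp he)),
      Multiset.filter_eq_nil.mpr
        (fun e he hall => hCK e (hR₂mem e (Multiset.mem_coe.mp he)) hall
          (hR₂all e (Multiset.mem_coe.mp he))), add_zero]
  have hfilter₂ : (C.edges : Multiset (Sym2 V)).filter (fun e => ∀ x ∈ e, x ∈ V₂) =
      (R₂.edges : Multiset (Sym2 V)) := by
    rw [← hsum, Multiset.filter_add]
    rw [Multiset.filter_eq_self.mpr (fun e he => hR₂all e (Multiset.mem_coe.mp he)),
      Multiset.filter_eq_nil.mpr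
        (fun e he hall => hCK e (hR₁mem e (Multiset.mem_coe.mp he))
          (hR₁all e (Multiset.mem_coe.mp he)) hall), zero_add]
  refine ⟨C₁, C₂, hC₁cyc, hC₂cyc, ?_, ?_, ?_⟩
  · rw [hfilter₁, hC₁ed, ← Multiset.cons_coe]
  · rw [hfilter₂, hC₂ed, ← Multiset.cons_coe, Sym2.eq_swap]
  · intro e he
    have : e ∈ (R₁.edges : Multiset (Sym2 V)) + (R₂.edges : Multiset (Sym2 V)) := by
      rw [hsum]; exact Multiset.mem_coe.mpr he
    rcases Multiset.mem_add.mp this with h1 | h2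
    · exact Or.inl ⟨hR₁all e (Multiset.mem_coe.mp h1),
        fun hall => hCK e he (hR₁all e (Multiset.mem_coe.mp h1)) hall⟩
    · exact Or.inr ⟨hR₂all e (Multiset.mem_coe.mp h2),
        fun hall => hCK e he hall (hR₂all e (Multiset.mem_coe.mp h2))⟩
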